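/- Assuming a conditional independence oracle and a distribution faithful to a Bayesian network, the Forward-Backward with Early Dropping algorithm run for two forward-backward Runs returns exactly the Markov blanket of the target T: after Run 1 all parents and children of T are selected (since none can be d-separated from T), after Run 2 all spouses of T are additionally selected (since conditioning on a common child d-connects them to T), and the backward phase removes exactly the selected variables outside the Markov blanket. -/

import Mathlib

open scoped Classical

/-- d-connection for a directed graph `E`: the vertex list `p` is a path from `x` to `y`
whose every collider is in `Z` or has a descendant in `Z`, and no non-collider is in `Z`. -/
def DConnecting {V : Type*} (E : V → V → Prop) (Z : Set V) (p : List V) (x y : V) : Prop :=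
  2 ≤ p.length ∧ p.head? = some x ∧ p.getLast? = some y ∧
  p.Chain' (fun a b => E a b ∨ E b a) ∧ p.Nodup ∧
  ∀ i (h : i + 2 < p.length),
    let a := p.get ⟨i, by omega⟩
    let b := p.get ⟨i + 1, by omega⟩
    let c := p.get ⟨i + 2, h⟩
    ((E a b ∧ E c b) → (b ∈ Z ∨ ∃ d ∈ Z, Relation.ReflTransGen E b d)) ∧
    (¬(E a b ∧ E c b) → b ∉ Z)

/-- `x` and `y` are d-separated given `Z` if no d-connecting path exists. -/
def DSeparated {V : Type*} (E : V → V → Prop) (Z : Set V) (x y : V) : Prop :=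
  ¬ ∃ p : List V, DConnecting E Z p x y

section Algorithm

variable {V : Type*} [Fintype V] [DecidableEq V] (E : V → V → Prop) (T : V)

/-- One step of the forward phase with Early Dropping, using the d-separation oracle
(faithfulness): some remaining variable that is conditionally dependent on `T` given the
current selection `S` is selected, and all remaining variables that are conditionally
independent of `T` given `S` are dropped from the remaining set. -/
noncomputable def FwdStep (p q : Finset V × Finset V) : Prop :=
  ∃ x ∈ p.2, ¬ DSeparated E ↑p.1 T x ∧
    q.1 = insert x p.1 ∧
    q.2 = (p.2.filter fun y => ¬ DSeparated E ↑p.1 T y).erase x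

/-- The forward phase is finished: every remaining variable is conditionally independent
of `T` given the selected set. -/
def FwdDone (p : Finset V × Finset V) : Prop :=
  ∀ y ∈ p.2, DSeparated E ↑p.1 T y

/-- A complete forward phase (one Run's forward loop) starting from selection `S₀` with all
non-selected variables (other than `T`) remaining, ending in a state where no remaining
variable can be selected. -/
def FwdPhase (S₀ S₁ : Finset V) : Prop :=
  ∃ R₁, Relation.ReflTransGen (FwdStep E T) (S₀, (Finset.univ.erase T) \ S₀) (S₁, R₁) ∧
    FwdDone E T (S₁, R₁)

/-- One backward-elimination step: remove a selected variable that is conditionally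
independent of `T` given the rest of the selection. -/
def BackStep (S S' : Finset V) : Prop :=
  ∃ x ∈ S, DSeparated E ↑(S.erase x) T x ∧ S' = S.erase x

/-- Backward elimination is finished: no selected variable can be removed. -/
def BackDone (S : Finset V) : Prop :=
  ∀ x ∈ S, ¬ DSeparated E ↑(S.erase x) T x

/-- A complete backward phase. -/
def BackPhase (S₀ S₁ : Finset V) : Prop :=
  Relation.ReflTransGen (BackStep E T) S₀ S₁ ∧ BackDone E T S₁

/-- One Run of the Forward-Backward with Early Dropping algorithm: a complete forward
phase followed by a complete backward phase. -/
def FBEDRun (S₀ S₁ : Finset V) : Prop :=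
  ∃ Sf, FwdPhase E T S₀ Sf ∧ BackPhase E T Sf S₁

/-- The (graphical) Markov blanket of `T` in a DAG: parents, children and spouses of `T`. -/
noncomputable def graphMB : Finset V :=
  Finset.univ.filter fun x => x ≠ T ∧ (E x T ∨ E T x ∨ ∃ c, E T c ∧ E x c)

end Algorithm

section AuxLemmas

variable {V : Type*} {E : V → V → Prop} {T : V}

lemma FBED.edge_ne (hacyclic : ∀ v, ¬ Relation.TransGen E v v) {a b : V} (h : E a b) :
    a ≠ b := by
  rintro rfl; exact hacyclic a (Relation.TransGen.single h)

lemma FBED.adj_not_dsep {x : V} (hx : x ≠ T) (h : E x T ∨ E T x) (Z : Set V) :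
    ¬ DSeparated E Z T x := by
  intro hsep
  refine hsep ⟨[T, x], ?_, ?_, ?_, ?_, ?_, ?_⟩
  · simp
  · simp
  · simp
  · simpa [List.Chain', List.isChain_cons_cons] using h.symm
  · simp [hx.symm]
  · intro i hi; simp at hi

lemma FBED.spouse_not_dsep (hacyclic : ∀ v, ¬ Relation.TransGen E v v) {x c : V} (hx : x ≠ T)
    (hTc : E T c) (hxc : E x c) {Z : Set V} (hc : c ∈ Z) :
    ¬ DSeparated E Z T x := by
  have hcT : c ≠ T := (FBED.edge_ne hacyclic hTc).symm
  have hcx : c ≠ x := (FBED.edge_ne hacyclic hxc).symm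
  intro hsep
  refine hsep ⟨[T, c, x], ?_, ?_, ?_, ?_, ?_, ?_⟩
  · simp
  · simp
  · simp
  · simp [List.Chain', List.isChain_cons_cons, Or.inl hTc, Or.inr hxc]
  · simp [hcT.symm, hx.symm, hcx]
  · intro i hi
    simp only [List.length_cons, List.length_nil] at hi
    obtain rfl : i = 0 := by omega
    refine ⟨fun _ => Or.inl ?_, fun hn => absurd ⟨hTc, hxc⟩ hn⟩
    simpa using hc

lemma FBED.mb_dsep [Fintype V] [DecidableEq V] (hacyclic : ∀ v, ¬ Relation.TransGen E v v)
    {x : V} (hxmb : x ∉ graphMB E T) {Z : Set V}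
    (hZ : ↑(graphMB E T) ⊆ Z) : DSeparated E Z T x := by
  rintro ⟨p, hlen, hhead, hlast, hchain, hnodup, hcoll⟩
  have hne : p ≠ [] := by rintro rfl; simp at hlen
  have h0 : p.get ⟨0, by omega⟩ = T := by
    rw [List.head?_eq_head hne, Option.some_inj] at hhead
    rw [List.get_mk_zero]; exact hhead
  have hlastget : p.get ⟨p.length - 1, by omega⟩ = x := by
    rw [List.getLast?_eq_getLast hne, Option.some_inj] at hlast
    rw [List.getLast_eq_getElem hne] at hlast; exact hlast
  have hget : ∀ (i : ℕ) (h : i + 1 < p.length), E (p.get ⟨i, by omega⟩) (p.get ⟨i + 1, h⟩) ∨ E (p.get ⟨i + 1, h⟩) (p.get ⟨i, by omega⟩) := List.isChain_iff_getElem.mp hchain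
  have getcongr : ∀ (i j : ℕ) (hi : i < p.length) (hj : j < p.length), i = j →
      p.get ⟨i, hi⟩ = p.get ⟨j, hj⟩ := by rintro i j hi hj rfl; rfl
  have hinj : ∀ {i j : Fin p.length}, p.get i = p.get j ↔ i = j := hnodup.get_inj_iff
  have hneT : ∀ (i : ℕ) (h : i < p.length), i ≠ 0 → p.get ⟨i, h⟩ ≠ T := by
    intro i h hi0 heq
    rw [← h0] at heq
    exact hi0 (by simpa [Fin.ext_iff] using hinj.mp heq)
  set v := p.get ⟨1, by omega⟩ with hv
  have hedge0 : E T v ∨ E v T := by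
    have := hget 0 (by omega); rwa [h0] at this
  have hvmb : v ∈ graphMB E T := by
    simp only [graphMB, Finset.mem_filter, Finset.mem_univ, true_and]
    refine ⟨hneT 1 (by omega) one_ne_zero, ?_⟩
    rcases hedge0 with h | h
    · exact Or.inr (Or.inl h)
    · exact Or.inl h
  have hvZ : v ∈ Z := hZ hvmb
  rcases eq_or_lt_of_le hlen with h2 | h3
  · have : v = x := by
      rw [← hlastget]
      exact getcongr 1 (p.length - 1) (by omega) (by omega) (by omega)
    apply hxmb; rw [← this]; exact hvmb
  · set w := p.get ⟨2, by omega⟩ with hw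
    have hc0 := hcoll 0 (by omega)
    simp only at hc0
    rw [h0] at hc0
    by_cases hcol : E T v ∧ E w v
    · have hwmb : w ∈ graphMB E T := by
        simp only [graphMB, Finset.mem_filter, Finset.mem_univ, true_and]
        exact ⟨hneT 2 (by omega) (by decide), Or.inr (Or.inr ⟨v, hcol.1, hcol.2⟩)⟩
      rcases eq_or_lt_of_le (Nat.succ_le_of_lt h3) with h3' | h4
      · have : w = x := by
          rw [← hlastget]
          exact getcongr 2 (p.length - 1) (by omega) (by omega) (by omega)
        exact hxmb (this ▸ hwmb)
      · have hc1 := hcoll 1 (by omega)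
        simp only at hc1
        apply hc1.2 _ (hZ hwmb)
        rintro ⟨hvw, -⟩
        exact hacyclic w (Relation.TransGen.head hcol.2 (Relation.TransGen.single hvw))
    · exact hc0.2 hcol hvZ

variable [Fintype V] [DecidableEq V]

omit [Fintype V] in
lemma FBED.fwd_invariant {x : V} {S₀ : Finset V}
    (hdep : ∀ S : Finset V, S₀ ⊆ S → ¬ DSeparated E ↑S T x)
    {p q : Finset V × Finset V} (h : Relation.ReflTransGen (FwdStep E T) p q)
    (hS : S₀ ⊆ p.1) (hx : x ∈ p.1 ∪ p.2) : S₀ ⊆ q.1 ∧ x ∈ q.1 ∪ q.2 := by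
  induction h with
  | refl => exact ⟨hS, hx⟩
  | tail _ step ih =>
    obtain ⟨hS', hx'⟩ := ih
    obtain ⟨y, hy, hydep, h1, h2⟩ := step
    constructor
    · rw [h1]; exact hS'.trans (Finset.subset_insert _ _)
    · rw [Finset.mem_union] at hx' ⊢
      rcases hx' with hx' | hx'
      · exact Or.inl (h1 ▸ Finset.mem_insert_of_mem hx')
      · by_cases hxy : x = y
        · exact Or.inl (h1 ▸ hxy ▸ Finset.mem_insert_self _ _)
        · refine Or.inr (h2 ▸ Finset.mem_erase.mpr ⟨hxy, ?_⟩)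
          exact Finset.mem_filter.mpr ⟨hx', hdep _ hS'⟩

omit [Fintype V] in
lemma FBED.fwd_T {p q : Finset V × Finset V}
    (h : Relation.ReflTransGen (FwdStep E T) p q)
    (hT : T ∉ p.1 ∧ T ∉ p.2) : T ∉ q.1 ∧ T ∉ q.2 := by
  induction h with
  | refl => exact hT
  | tail _ step ih =>
    obtain ⟨y, hy, _, h1, h2⟩ := step
    refine ⟨fun hc => ?_, fun hc => ?_⟩
    · rw [h1, Finset.mem_insert] at hc
      rcases hc with rfl | hc
      · exact ih.2 hy
      · exact ih.1 hc
    · rw [h2] at hc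
      exact ih.2 (Finset.mem_of_mem_filter _ (Finset.mem_of_mem_erase hc))

omit [Fintype V] in
lemma FBED.back_subset {S S' : Finset V}
    (h : Relation.ReflTransGen (BackStep E T) S S') : S' ⊆ S := by
  induction h with
  | refl => exact subset_rfl
  | tail _ step ih =>
    obtain ⟨y, _, _, h1⟩ := step
    exact h1 ▸ (Finset.erase_subset _ _).trans ih

omit [Fintype V] in
lemma FBED.back_invariant {M : Finset V}
    (hM : ∀ x ∈ M, ∀ S : Finset V, M ⊆ S → ¬ DSeparated E ↑(S.erase x) T x)
    {S S' : Finset V} (h : Relation.ReflTransGen (BackStep E T) S S') (hMS : M ⊆ S) :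
    M ⊆ S' := by
  induction h with
  | refl => exact hMS
  | tail _ step ih =>
    obtain ⟨y, hy, hsep, h1⟩ := step
    have hyM : y ∉ M := fun hc => hM y hc _ ih hsep
    exact h1 ▸ fun z hz => Finset.mem_erase.mpr ⟨fun h => hyM (h ▸ hz), ih hz⟩

end AuxLemmas


/-- For a distribution faithful to a Bayesian network (so the conditional-independence
oracle coincides with d-separation in the DAG `E`), the Forward-Backward with Early
Dropping algorithm run for two Runs returns exactly the Markov blanket of the target `T`:
Run 1 selects all parents and children of `T` (none can be d-separated from `T`), Run 2
additionally selects all spouses of `T` (conditioning on a common child d-connects them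
to `T`), and backward elimination removes exactly the selected variables outside the
Markov blanket. -/
theorem fbed_two_runs_markov_blanket {V : Type*} [Fintype V] [DecidableEq V]
    (E : V → V → Prop) (hacyclic : ∀ v, ¬ Relation.TransGen E v v) (T : V) :
    ∀ S₁ S₂ : Finset V, FBEDRun E T ∅ S₁ → FBEDRun E T S₁ S₂ → S₂ = graphMB E T := by
  intro S₁ S₂ h1 h2
  obtain ⟨Sf1, ⟨R1, hfwd1, hdone1⟩, hb1, hbdone1⟩ := h1
  obtain ⟨Sf2, ⟨R2, hfwd2, hdone2⟩, hb2, hbdone2⟩ := h2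
  classical
  set PC : Finset V := Finset.univ.filter (fun y => y ≠ T ∧ (E y T ∨ E T y)) with hPC
  have hPCmem : ∀ y, y ∈ PC ↔ (y ≠ T ∧ (E y T ∨ E T y)) := by
    intro y; simp [hPC]
  -- Run 1 forward: all parents and children end up selected
  have hPCSf1 : PC ⊆ Sf1 := by
    intro y hy
    obtain ⟨hyT, hadj⟩ := (hPCmem y).mp hy
    have hdep : ∀ S : Finset V, (∅ : Finset V) ⊆ S → ¬ DSeparated E ↑S T y :=
      fun S _ => FBED.adj_not_dsep hyT hadj _
    have hinit : y ∈ (∅ : Finset V) ∪ (Finset.univ.erase T \ ∅) := by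
      simp [hyT]
    obtain ⟨hsub, hmem⟩ := FBED.fwd_invariant hdep hfwd1 (by simp) hinit
    rcases Finset.mem_union.mp hmem with hmem | hmem
    · exact hmem
    · exact absurd (hdone1 y hmem) (hdep Sf1 (Finset.empty_subset _))
  -- Run 1 backward: parents and children are never removed
  have hPCS1 : PC ⊆ S₁ := by
    refine FBED.back_invariant ?_ hb1 hPCSf1
    intro y hy S _
    obtain ⟨hyT, hadj⟩ := (hPCmem y).mp hy
    exact FBED.adj_not_dsep hyT hadj _
  -- T is never selected
  have hTS1 : T ∉ S₁ := by
    have := FBED.fwd_T hfwd1 ⟨by simp, by simp⟩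
    exact fun hc => (FBED.back_subset hb1 hc |> this.1)
  -- Run 2 forward: the whole Markov blanket ends up selected
  have hMBmem : ∀ y, y ∈ graphMB E T ↔
      (y ≠ T ∧ (E y T ∨ E T y ∨ ∃ c, E T c ∧ E y c)) := by
    intro y; simp [graphMB]
  have hMBSf2 : graphMB E T ⊆ Sf2 := by
    intro y hy
    obtain ⟨hyT, hcase⟩ := (hMBmem y).mp hy
    have hdep : ∀ S : Finset V, S₁ ⊆ S → ¬ DSeparated E ↑S T y := by
      intro S hS
      rcases hcase with h | h | ⟨c, hTc, hyc⟩
      · exact FBED.adj_not_dsep hyT (Or.inl h) _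
      · exact FBED.adj_not_dsep hyT (Or.inr h) _
      · have hcPC : c ∈ PC :=
          (hPCmem c).mpr ⟨(FBED.edge_ne hacyclic hTc).symm, Or.inr hTc⟩
        exact FBED.spouse_not_dsep hacyclic hyT hTc hyc
          (Finset.mem_coe.mpr (hS (hPCS1 hcPC)))
    have hinit : y ∈ S₁ ∪ (Finset.univ.erase T \ S₁) := by
      by_cases hyS : y ∈ S₁
      · exact Finset.mem_union_left _ hyS
      · exact Finset.mem_union_right _ (Finset.mem_sdiff.mpr ⟨by simp [hyT], hyS⟩)
    obtain ⟨hsub, hmem⟩ := FBED.fwd_invariant hdep hfwd2 subset_rfl hinit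
    rcases Finset.mem_union.mp hmem with hmem | hmem
    · exact hmem
    · exact absurd (hdone2 y hmem) (hdep Sf2 hsub)
  -- Run 2 backward: the Markov blanket is never removed
  have hMBS2 : graphMB E T ⊆ S₂ := by
    refine FBED.back_invariant ?_ hb2 hMBSf2
    intro y hy S hMS
    obtain ⟨hyT, hcase⟩ := (hMBmem y).mp hy
    rcases hcase with h | h | ⟨c, hTc, hyc⟩
    · exact FBED.adj_not_dsep hyT (Or.inl h) _
    · exact FBED.adj_not_dsep hyT (Or.inr h) _
    · have hcMB : c ∈ graphMB E T :=
        (hMBmem c).mpr ⟨(FBED.edge_ne hacyclic hTc).symm, Or.inr (Or.inl hTc)⟩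
      have hcy : c ≠ y := (FBED.edge_ne hacyclic hyc).symm
      exact FBED.spouse_not_dsep hacyclic hyT hTc hyc
        (Finset.mem_coe.mpr (Finset.mem_erase.mpr ⟨hcy, hMS hcMB⟩))
  -- everything outside the Markov blanket is removed by backward elimination
  have hTS2 : T ∉ S₂ := by
    have hT2 := FBED.fwd_T hfwd2 ⟨hTS1, by simp⟩
    exact fun hc => (FBED.back_subset hb2 hc |> hT2.1)
  refine Finset.Subset.antisymm ?_ hMBS2
  intro y hy
  by_contra hn
  refine hbdone2 y hy (FBED.mb_dsep hacyclic hn ?_)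
  intro z hz
  exact Finset.mem_coe.mpr (Finset.mem_erase.mpr
    ⟨fun h => hn (h ▸ hz), hMBS2 hz⟩)
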